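/- Let A be a countable alphabet, P a probability distribution on A with finite source entropy H(P), S a proper dictionary over A, and α ∈ S. If H(S) = H(P)·l̄(S), then the extended dictionary also satisfies H(S[α]) = H(P)·l̄(S[α]). -/

import Mathlib

open scoped ENNReal
open Filter

/-- The probability of a finite string, obtained by extending the
distribution `P` multiplicatively: `P(a₁⋯aₙ) = ∏ᵢ P(aᵢ)`. -/
noncomputable def strProb {A : Type*} (P : PMF A) (l : List A) : ℝ≥0∞ :=
  (l.map fun a => P a).prod

/-- A dictionary is a set of nonempty finite strings. -/
def IsDictionary {A : Type*} (D : Set (List A)) : Prop :=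
  ∀ α ∈ D, α ≠ []

/-- A dictionary is proper if no string in it is a (proper) prefix of
another string in it. -/
def IsProper {A : Type*} (D : Set (List A)) : Prop :=
  ∀ α ∈ D, ∀ β ∈ D, α <+: β → α = β

/-- A dictionary is complete if every infinite sequence over `A` has a
prefix in it. -/
def IsCompleteDict {A : Type*} (D : Set (List A)) : Prop :=
  ∀ x : ℕ → A, ∃ α ∈ D, α = (List.range α.length).map x

/-- The probability that the length-`n` prefix of a random infinite sequence
has some prefix belonging to `D`. -/
noncomputable def prefixProb {A : Type*} (P : PMF A) (D : Set (List A)) (n : ℕ) : ℝ≥0∞ :=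
  ∑' γ : {γ : List A // γ.length = n ∧ ∃ β ∈ D, β <+: γ}, strProb P γ

/-- `D` is almost surely complete: under the infinite product measure `P^ℕ`,
the event that an infinite sequence has a prefix in `D` has probability `1`.
(By continuity from below, this probability is the limit, as `n → ∞`, of the
probability that the length-`n` prefix has a prefix in `D`.) -/
def IsASC {A : Type*} (P : PMF A) (D : Set (List A)) : Prop :=
  Tendsto (prefixProb P D) atTop (nhds 1)

/-- `Tset D n` = strings of length `n` having no prefix in `D`. -/
def Tset {A : Type*} (D : Set (List A)) (n : ℕ) : Set (List A) :=
  {α | α.length = n ∧ ∀ β ∈ D, ¬ β <+: α}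

/-- `Dperp D n = {α ∈ D : |α| = n} ∪ Tₙ`. -/
def Dperp {A : Type*} (D : Set (List A)) (n : ℕ) : Set (List A) :=
  {α ∈ D | α.length = n} ∪ Tset D n

/-- `Dn D n = {α ∈ D : |α| < n} ∪ Dₙ^⊥`. -/
def Dn {A : Type*} (D : Set (List A)) (n : ℕ) : Set (List A) :=
  {α ∈ D | α.length < n} ∪ Dperp D n

/-- The one-letter extensions `αA = {αa : a ∈ A}` of a string `α`. -/
def oneExt {A : Type*} (α : List A) : Set (List A) :=
  {l | ∃ a : A, l = α ++ [a]}

/-- The extension `D[α] = (D \ {α}) ∪ αA` of a dictionary at `α`. -/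
def extendDict {A : Type*} (D : Set (List A)) (α : List A) : Set (List A) :=
  (D \ {α}) ∪ oneExt α

/-- The nonnegative entropy contribution `-p log₂ p ∈ [0,∞]` of a
probability value `p`. -/
noncomputable def entTerm (p : ℝ≥0∞) : ℝ≥0∞ :=
  ENNReal.ofReal (-(p.toReal * Real.logb 2 p.toReal))

/-- The entropy `H(E) = -∑_{α∈E} P(α) log₂ P(α)` of a dictionary, in `[0,∞]`. -/
noncomputable def dictEntropy {A : Type*} (P : PMF A) (E : Set (List A)) : ℝ≥0∞ :=
  ∑' α : E, entTerm (strProb P α)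

/-- The average length `l̄(E) = ∑_{α∈E} P(α)|α|` of a dictionary, in `[0,∞]`. -/
noncomputable def avgLen {A : Type*} (P : PMF A) (E : Set (List A)) : ℝ≥0∞ :=
  ∑' α : E, strProb P α * (α : List A).length

/-- The source entropy `H(P) = -∑_{a∈A} P(a) log₂ P(a)`, in `[0,∞]`. -/
noncomputable def srcEntropy {A : Type*} (P : PMF A) : ℝ≥0∞ :=
  ∑' a : A, entTerm (P a)

lemma strProb_le_one {A : Type*} (P : PMF A) (l : List A) : strProb P l ≤ 1 := by
  induction l with
  | nil => simp [strProb]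
  | cons a l ih =>
    have h : strProb P (a :: l) = P a * strProb P l := by simp [strProb]
    rw [h]
    calc P a * strProb P l ≤ 1 * 1 := mul_le_mul' (PMF.coe_le_one P a) ih
    _ = 1 := one_mul 1

lemma strProb_append {A : Type*} (P : PMF A) (l m : List A) :
    strProb P (l ++ m) = strProb P l * strProb P m := by
  simp [strProb]

lemma entTerm_mul {p q : ℝ≥0∞} (hp : p ≤ 1) (hq : q ≤ 1) :
    entTerm (p * q) = q * entTerm p + p * entTerm q := by
  have hp' : p ≠ ⊤ := ne_top_of_le_ne_top ENNReal.one_ne_top hp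
  have hq' : q ≠ ⊤ := ne_top_of_le_ne_top ENNReal.one_ne_top hq
  set x := p.toReal with hx
  set y := q.toReal with hy
  have hx0 : 0 ≤ x := ENNReal.toReal_nonneg
  have hy0 : 0 ≤ y := ENNReal.toReal_nonneg
  have hx1 : x ≤ 1 := by
    rw [hx]; exact ENNReal.toReal_le_of_le_ofReal one_pos.le (by simpa using hp)
  have hy1 : y ≤ 1 := by
    rw [hy]; exact ENNReal.toReal_le_of_le_ofReal one_pos.le (by simpa using hq)
  have hnn : ∀ z : ℝ, 0 ≤ z → z ≤ 1 → 0 ≤ -(z * Real.logb 2 z) := by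
    intro z h0 h1
    have : Real.logb 2 z ≤ 0 := Real.logb_nonpos one_lt_two h0 h1
    nlinarith
  have hpq : (p * q).toReal = x * y := ENNReal.toReal_mul
  have hid : -(x * y * Real.logb 2 (x * y)) =
      y * (-(x * Real.logb 2 x)) + x * (-(y * Real.logb 2 y)) := by
    rcases eq_or_ne x 0 with hx' | hx'
    · simp [hx']
    rcases eq_or_ne y 0 with hy' | hy'
    · simp [hy']
    rw [Real.logb_mul hx' hy']; ring
  have hpe : p = ENNReal.ofReal x := (ENNReal.ofReal_toReal hp').symm
  have hqe : q = ENNReal.ofReal y := (ENNReal.ofReal_toReal hq').symm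
  have h1 : q * entTerm p = ENNReal.ofReal (y * (-(x * Real.logb 2 x))) := by
    rw [entTerm, hqe, ← ENNReal.ofReal_mul hy0]
  have h2 : p * entTerm q = ENNReal.ofReal (x * (-(y * Real.logb 2 y))) := by
    rw [entTerm, hpe, ← ENNReal.ofReal_mul hx0]
  calc entTerm (p * q)
      = ENNReal.ofReal (y * (-(x * Real.logb 2 x)) + x * (-(y * Real.logb 2 y))) := by
        rw [entTerm, hpq, hid]
    _ = ENNReal.ofReal (y * (-(x * Real.logb 2 x))) +
        ENNReal.ofReal (x * (-(y * Real.logb 2 y))) :=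
        ENNReal.ofReal_add (by have := hnn x hx0 hx1; positivity)
          (by have := hnn y hy0 hy1; positivity)
    _ = q * entTerm p + p * entTerm q := by rw [h1, h2]

lemma tsum_split_off {A : Type*} (S : Set (List A)) (α : List A) (hα : α ∈ S)
    (f : List A → ℝ≥0∞) :
    ∑' x : S, f x = (∑' x : (S \ {α} : Set (List A)), f x) + f α := by
  have hu : (S \ {α}) ∪ {α} = S := Set.diff_union_of_subset (by simpa using hα)
  have h2 := Summable.tsum_union_disjoint (f := f) (s := S \ {α}) (t := {α})
    (by simp [Set.disjoint_left]) ENNReal.summable ENNReal.summable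
  rw [hu, tsum_singleton] at h2
  exact h2

lemma tsum_oneExt {A : Type*} (α : List A) (f : List A → ℝ≥0∞) :
    ∑' x : oneExt α, f x = ∑' a : A, f (α ++ [a]) := by
  have hg : Function.Bijective (fun a : A => (⟨α ++ [a], a, rfl⟩ : oneExt α)) := by
    constructor
    · intro a b hab
      have := congrArg Subtype.val hab
      simpa using this
    · rintro ⟨x, a, rfl⟩
      exact ⟨a, rfl⟩
  exact ((Equiv.ofBijective _ hg).tsum_eq fun x : oneExt α => f x).symm

lemma tsum_extendDict {A : Type*} (S : Set (List A)) (hprop : IsProper S)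
    (α : List A) (hα : α ∈ S) (f : List A → ℝ≥0∞) :
    ∑' x : extendDict S α, f x =
      (∑' x : (S \ {α} : Set (List A)), f x) + ∑' a : A, f (α ++ [a]) := by
  have hdisj : Disjoint (S \ ({α} : Set (List A))) (oneExt α) := by
    rw [Set.disjoint_left]
    rintro x ⟨hxS, hxne⟩ ⟨a, rfl⟩
    have := hprop α hα _ hxS ⟨[a], rfl⟩
    have hne : α ++ [a] ≠ α := by simpa using hxne
    exact hne this.symm
  rw [extendDict, Summable.tsum_union_disjoint (f := f) hdisj ENNReal.summable
    ENNReal.summable, tsum_oneExt]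

/-- For a proper dictionary `S` and `α ∈ S` with finite source
entropy: if `H(S) = H(P)·l̄(S)` then `H(S[α]) = H(P)·l̄(S[α])`. -/
theorem extendDict_preserves_entropy_eq {A : Type*} [Countable A] (P : PMF A)
    (hH : srcEntropy P < ⊤) (S : Set (List A)) (hdict : IsDictionary S)
    (hprop : IsProper S) (α : List A) (hα : α ∈ S)
    (h : dictEntropy P S = srcEntropy P * avgLen P S) :
    dictEntropy P (extendDict S α) = srcEntropy P * avgLen P (extendDict S α) := by
  classical
  set p := strProb P α with hp
  set H := srcEntropy P with hHdef
  set L := ((α.length : ℝ≥0∞)) with hL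
  -- entropy of the extension block
  have hent1 : ∀ a : A, entTerm (strProb P (α ++ [a])) =
      P a * entTerm p + p * entTerm (P a) := by
    intro a
    rw [strProb_append]
    have : strProb P [a] = P a := by simp [strProb]
    rw [this]
    exact entTerm_mul (strProb_le_one P α) (PMF.coe_le_one P a)
  have hsum1 : (∑' a : A, entTerm (strProb P (α ++ [a]))) = entTerm p + p * H := by
    calc (∑' a : A, entTerm (strProb P (α ++ [a])))
        = ∑' a : A, (P a * entTerm p + p * entTerm (P a)) := by
          exact tsum_congr hent1
      _ = (∑' a : A, P a * entTerm p) + ∑' a : A, p * entTerm (P a) :=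
          ENNReal.tsum_add
      _ = (∑' a : A, P a) * entTerm p + p * ∑' a : A, entTerm (P a) := by
          rw [ENNReal.tsum_mul_right, ENNReal.tsum_mul_left]
      _ = entTerm p + p * H := by rw [P.tsum_coe, one_mul, hHdef, srcEntropy]
  -- average length of the extension block
  have hsum2 : (∑' a : A, strProb P (α ++ [a]) * ((α ++ [a]).length : ℝ≥0∞))
      = p * (L + 1) := by
    calc (∑' a : A, strProb P (α ++ [a]) * ((α ++ [a]).length : ℝ≥0∞))
        = ∑' a : A, P a * (p * (L + 1)) := by
          refine tsum_congr fun a => ?_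
          rw [strProb_append]
          have h1 : strProb P [a] = P a := by simp [strProb]
          have h2 : (((α ++ [a]).length : ℕ) : ℝ≥0∞) = L + 1 := by
            rw [hL]
            simp only [List.length_append, List.length_singleton]
            push_cast
            ring
          rw [h1, h2]; ring
      _ = (∑' a : A, P a) * (p * (L + 1)) := ENNReal.tsum_mul_right
      _ = p * (L + 1) := by rw [P.tsum_coe, one_mul]
  -- decompose the original sums
  set X := ∑' x : (S \ {α} : Set (List A)), entTerm (strProb P x) with hX
  set Y := ∑' x : (S \ {α} : Set (List A)),
      strProb P x * ((x : List A).length : ℝ≥0∞) with hY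
  have hdS : dictEntropy P S = X + entTerm p :=
    tsum_split_off S α hα (fun l => entTerm (strProb P l))
  have haS : avgLen P S = Y + p * L :=
    tsum_split_off S α hα (fun l => strProb P l * (l.length : ℝ≥0∞))
  have hdE : dictEntropy P (extendDict S α) = X + (entTerm p + p * H) := by
    have h3 := tsum_extendDict S hprop α hα (fun l => entTerm (strProb P l))
    rw [hsum1] at h3
    exact h3
  have haE : avgLen P (extendDict S α) = Y + p * (L + 1) := by
    have h3 := tsum_extendDict S hprop α hα
      (fun l => strProb P l * (l.length : ℝ≥0∞))
    rw [hsum2] at h3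
    exact h3
  rw [hdE, haE]
  rw [hdS, haS] at h
  have key : Y + p * (L + 1) = (Y + p * L) + p := by ring
  rw [key, mul_add, ← h]
  ring
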